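/- (Proposition 5.2: lattice elliptic regularity) Let d ≥ 1, R > 0, and let Ω ⊂ U(R/4) be open and connected, with Ω_ε = Ω ∩ (εℤ)^d. For every k ≥ 0 there exist ε₀ > 0 and a constant C, both depending only on R, Ω, k and d (in particular independent of ε, a and f), such that for all ε ∈ (0, ε₀], all a ≥ 0 and all bounded f : ∂U_ε(R) → ℝ, the solution h of the lattice Dirichlet problem on U_ε(R) with boundary data f satisfies ‖h‖_{H_k(Ω_ε)} ≤ C (1+a)^{−1/2} max_{y∈∂U_ε(R)} |f(y)| (for ε ≤ ε₀ every lattice derivative occurring in this norm is evaluated using only points of Ū_ε(R)). -/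

import Mathlib

open scoped ENNReal BigOperators

namespace FRD

abbrev Pt (d : ℕ) := Fin d → ℝ
abbrev Idx (d : ℕ) := Fin d → ℤ

variable {d : ℕ}

/-- The lattice point of `(εℤ)^d` with integer coordinates `k`. -/
noncomputable def toPt (ε : ℝ) (k : Idx d) : Pt d := fun i => ε * (k i : ℝ)

/-- The lattice `(εℤ)^d` as a subset of `ℝ^d`. -/
def latt (d : ℕ) (ε : ℝ) : Set (Pt d) := Set.range (toPt (d := d) ε)

/-- Signed unit direction: `e.1` is the coordinate, `e.2` the sign. -/
noncomputable def sdir (d : ℕ) (e : Fin d × Bool) : Pt d :=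
  Pi.single e.1 (if e.2 then (1 : ℝ) else -1)

/-- Forward/backward lattice derivative in the signed direction `e`. -/
noncomputable def nabla (ε : ℝ) (e : Fin d × Bool) (f : Pt d → ℝ) (x : Pt d) : ℝ :=
  ε⁻¹ * (f (x + ε • sdir d e) - f x)

/-- Iterated lattice derivative. -/
noncomputable def nablaList (ε : ℝ) : List (Fin d × Bool) → (Pt d → ℝ) → Pt d → ℝ
  | [], f => f
  | e :: es, f => nabla ε e (nablaList ε es f)

/-- Lattice Laplacian `Δ_ε`. -/
noncomputable def latLap (ε : ℝ) (f : Pt d → ℝ) (x : Pt d) : ℝ :=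
  ε⁻¹ ^ 2 * ∑ μ : Fin d,
    (f (x + ε • (Pi.single μ 1 : Pt d)) + f (x - ε • (Pi.single μ 1 : Pt d)) - 2 * f x)

/-- Open cube of edge length `R` centered at `z` (sup-metric). -/
def cubeC (z : Pt d) (R : ℝ) : Set (Pt d) := {x | ∀ i, |x i - z i| < R / 2}

/-- `U_ε(R)` (centered at `z`). -/
def UC (ε : ℝ) (z : Pt d) (R : ℝ) : Set (Pt d) := cubeC z R ∩ latt d ε

/-- Lattice boundary `∂U_ε(R)` (centered at `z`). -/
def bdryC (ε : ℝ) (z : Pt d) (R : ℝ) : Set (Pt d) :=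
  {y | y ∈ latt d ε ∧ y ∉ UC ε z R ∧ ∃ x ∈ UC ε z R, ‖x - y‖ = ε}

/-- `Ū_ε(R) = U_ε(R) ∪ ∂U_ε(R)`. -/
def clC (ε : ℝ) (z : Pt d) (R : ℝ) : Set (Pt d) := UC ε z R ∪ bdryC ε z R

/-- `h` solves the lattice Dirichlet problem on the cube of edge `R` centered at `z`,
with mass `a` and boundary data `f`. -/
def IsDirSol (ε : ℝ) (z : Pt d) (R a : ℝ) (f h : Pt d → ℝ) : Prop :=
  (∀ x ∈ UC ε z R, a * h x - latLap ε h x = 0) ∧ ∀ x ∈ bdryC ε z R, h x = f x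

/-- Lattice integral of `F` over the lattice points lying in `X` (`ℝ≥0∞`-valued). -/
noncomputable def eint (ε : ℝ) (X : Set (Pt d)) (F : Pt d → ℝ) : ℝ≥0∞ :=
  ∑' k : Idx d, Set.indicator X (fun x => ENNReal.ofReal (ε ^ d * F x)) (toPt ε k)

/-- Squared lattice Sobolev norm `‖f‖²_{H_K(X_ε)}`. -/
noncomputable def sobSq (ε : ℝ) (K : ℕ) (X : Set (Pt d)) (f : Pt d → ℝ) : ℝ≥0∞ :=
  ∑ j ∈ Finset.range (K + 1), (2 : ℝ≥0∞)⁻¹ ^ j *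
    ∑ es : Fin j → Fin d × Bool,
      eint ε X fun x => (nablaList ε (List.ofFn es) f x) ^ 2

/-- Lattice Sobolev norm `‖f‖_{H_K(X_ε)}`. -/
noncomputable def sobNorm (ε : ℝ) (K : ℕ) (X : Set (Pt d)) (f : Pt d → ℝ) : ℝ≥0∞ :=
  sobSq ε K X f ^ (1/2 : ℝ)

/-- Real-valued lattice integral over the whole lattice. -/
noncomputable def lint (ε : ℝ) (F : Pt d → ℝ) : ℝ := ε ^ d * ∑' k : Idx d, F (toPt ε k)

/-- Squared weighted lattice Sobolev norm `‖f‖²_{φ,K}`. -/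
noncomputable def wSobSq (ε : ℝ) (K : ℕ) (φ : Pt d → ℝ) (f : Pt d → ℝ) : ℝ≥0∞ :=
  ∑ j ∈ Finset.range (K + 1), (2 : ℝ≥0∞)⁻¹ ^ j *
    ∑ es : Fin j → Fin d × Bool,
      ∑' k : Idx d, ENNReal.ofReal
        (ε ^ d * φ (toPt ε k) * (nablaList ε (List.ofFn es) f (toPt ε k)) ^ 2)

/-- Weighted lattice Sobolev norm `‖f‖_{φ,K}`. -/
noncomputable def wSobNorm (ε : ℝ) (K : ℕ) (φ : Pt d → ℝ) (f : Pt d → ℝ) : ℝ≥0∞ :=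
  wSobSq ε K φ f ^ (1/2 : ℝ)

section Aux

variable {d : ℕ}

def zdir (e : Fin d × Bool) : Idx d := Pi.single e.1 (if e.2 then 1 else -1)

noncomputable def D (ε : ℝ) (e : Fin d × Bool) (u : Idx d → ℝ) (m : Idx d) : ℝ :=
  ε⁻¹ * (u (m + zdir e) - u m)

noncomputable def Dlist (ε : ℝ) : List (Fin d × Bool) → (Idx d → ℝ) → Idx d → ℝ
  | [], u => u
  | e :: es, u => D ε e (Dlist ε es u)

lemma toPt_add (ε : ℝ) (m n : Idx d) : toPt ε (m + n) = toPt ε m + toPt ε n := by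
  funext i; simp only [toPt, Pi.add_apply, Int.cast_add]; ring

lemma toPt_zdir (ε : ℝ) (e : Fin d × Bool) : toPt ε (zdir e) = ε • sdir d e := by
  funext i
  simp only [toPt, zdir, sdir, Pi.smul_apply, smul_eq_mul, Pi.single_apply]
  by_cases h : i = e.1 <;> simp [h] <;> cases e.2 <;> simp

lemma nabla_toPt (ε : ℝ) (e : Fin d × Bool) (f : Pt d → ℝ) (m : Idx d) :
    nabla ε e f (toPt ε m) = D ε e (fun n => f (toPt ε n)) m := by
  simp only [nabla, D, toPt_add, toPt_zdir]

lemma nablaList_toPt (ε : ℝ) (es : List (Fin d × Bool)) (f : Pt d → ℝ) (m : Idx d) :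
    nablaList ε es f (toPt ε m) = Dlist ε es (fun n => f (toPt ε n)) m := by
  induction es generalizing m with
  | nil => rfl
  | cons e es ih =>
      show nabla ε e (nablaList ε es f) (toPt ε m) = _
      rw [nabla_toPt]
      simp only [D, Dlist, ih]

lemma sum_eq_sum_of_support {g : Idx d → ℝ} {s t : Finset (Idx d)}
    (hs : ∀ m, g m ≠ 0 → m ∈ s) (ht : ∀ m, g m ≠ 0 → m ∈ t) :
    ∑ m ∈ s, g m = ∑ m ∈ t, g m := by
  have h1 : ∑ m ∈ s ∩ t, g m = ∑ m ∈ s, g m :=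
    Finset.sum_subset (Finset.inter_subset_left) (fun x hx hxn => by
      by_contra hne
      exact hxn (Finset.mem_inter.2 ⟨hx, ht x hne⟩))
  have h2 : ∑ m ∈ s ∩ t, g m = ∑ m ∈ t, g m :=
    Finset.sum_subset (Finset.inter_subset_right) (fun x hx hxn => by
      by_contra hne
      exact hxn (Finset.mem_inter.2 ⟨hs x hne, hx⟩))
  rw [← h1, h2]

lemma sum_shift {B : Finset (Idx d)} {g : Idx d → ℝ} {t : Idx d}
    (h : ∀ m, g m ≠ 0 → m ∈ B ∧ m - t ∈ B) :
    ∑ m ∈ B, g (m + t) = ∑ m ∈ B, g m := by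
  have h0 : ∑ m ∈ B.map (Equiv.toEmbedding (Equiv.addRight t)), g m = ∑ m ∈ B, g (m + t) := by
    rw [Finset.sum_map]; simp
  rw [← h0]
  apply sum_eq_sum_of_support
  · intro m hm
    rw [Finset.mem_map]
    exact ⟨m - t, (h m hm).2, by simp⟩
  · intro m hm; exact (h m hm).1

def dflip (e : Fin d × Bool) : Fin d × Bool := (e.1, !e.2)

lemma zdir_flip (e : Fin d × Bool) : zdir (dflip e) = - zdir e := by
  rcases e with ⟨μ, b⟩
  cases b <;> simp [zdir, dflip, ← Pi.single_neg]

lemma sum_dflip (F : Fin d × Bool → ℝ) : ∑ e, F (dflip e) = ∑ e, F e := by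
  apply Fintype.sum_bijective dflip
  · exact Function.Involutive.bijective (fun e => by rcases e with ⟨μ,b⟩; cases b <;> rfl)
  · intro e; rfl

end Aux
section NormCut

variable {d : ℕ}

noncomputable def nm (ε : ℝ) (m : Idx d) : ℝ := ‖toPt ε m‖

lemma nm_nonneg (ε : ℝ) (m : Idx d) : 0 ≤ nm ε m := norm_nonneg _

lemma norm_sdir (d : ℕ) (e : Fin d × Bool) : ‖sdir d e‖ = 1 := by
  rw [sdir, Pi.norm_single]
  cases e.2 <;> simp

lemma nm_zdir_abs (ε : ℝ) (hε : 0 ≤ ε) (m : Idx d) (e : Fin d × Bool) :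
    |nm ε (m + zdir e) - nm ε m| ≤ ε := by
  have h := abs_norm_sub_norm_le (toPt ε m + ε • sdir d e) (toPt ε m)
  rw [add_sub_cancel_left, norm_smul, norm_sdir, mul_one, Real.norm_eq_abs,
    abs_of_nonneg hε] at h
  rw [nm, nm, toPt_add, toPt_zdir]
  exact h

lemma nm_add_le (ε : ℝ) (hε : 0 ≤ ε) (m : Idx d) (e : Fin d × Bool) :
    nm ε (m + zdir e) ≤ nm ε m + ε := by
  have := (abs_le.mp (nm_zdir_abs ε hε m e)).2; linarith

lemma nm_le_add (ε : ℝ) (hε : 0 ≤ ε) (m : Idx d) (e : Fin d × Bool) :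
    nm ε m ≤ nm ε (m + zdir e) + ε := by
  have := (abs_le.mp (nm_zdir_abs ε hε m e)).1; linarith

lemma mem_cube_iff (ε R' : ℝ) (hR' : 0 < R') (m : Idx d) :
    toPt ε m ∈ cubeC (0 : Pt d) R' ↔ nm ε m < R' / 2 := by
  rw [nm, pi_norm_lt_iff (by linarith : (0:ℝ) < R'/2)]
  constructor
  · intro h i; have := h i; simpa using this
  · intro h i; have := h i; simpa using this

lemma coord_le_nm (ε : ℝ) (m : Idx d) (i : Fin d) : |ε * (m i : ℝ)| ≤ nm ε m := by
  have := norm_le_pi_norm (toPt ε m) i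
  rw [nm]
  simpa [toPt, abs_mul] using this

/-- cutoff function -/
noncomputable def cut (ε δ t : ℝ) (m : Idx d) : ℝ := max 0 (min 1 ((t - nm ε m) / δ))

lemma cut_nonneg (ε δ t : ℝ) (m : Idx d) : 0 ≤ cut ε δ t m := le_max_left _ _

lemma cut_le_one (ε δ t : ℝ) (m : Idx d) : cut ε δ t m ≤ 1 := by
  apply max_le (by norm_num) (min_le_left _ _)

lemma cut_ne_zero (ε δ t : ℝ) (hδ : 0 < δ) (m : Idx d) (h : cut ε δ t m ≠ 0) :
    nm ε m < t := by
  by_contra hc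
  push_neg at hc
  apply h
  rw [cut, max_eq_left]
  exact le_trans (min_le_right _ _) (div_nonpos_of_nonpos_of_nonneg (by linarith) hδ.le)

lemma cut_eq_one (ε δ t : ℝ) (hδ : 0 < δ) (m : Idx d) (h : nm ε m ≤ t - δ) :
    cut ε δ t m = 1 := by
  rw [cut, min_eq_left, max_eq_right (by norm_num)]
  rw [le_div_iff₀ hδ]; linarith

lemma cut_lip (ε δ t : ℝ) (hδ : 0 < δ) (hε : 0 ≤ ε) (m : Idx d) (e : Fin d × Bool) :
    |cut ε δ t (m + zdir e) - cut ε δ t m| ≤ ε / δ := by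
  have h1 : |cut ε δ t (m + zdir e) - cut ε δ t m| ≤
      |min 1 ((t - nm ε (m + zdir e)) / δ) - min 1 ((t - nm ε m) / δ)| := by
    rw [cut, cut, max_comm 0 _, max_comm 0 _]
    exact abs_max_sub_max_le_abs _ _ _
  have habsmin : ∀ c x y : ℝ, |min c x - min c y| ≤ |x - y| := by
    intro c x y
    rcases le_total c x with h1 | h1 <;> rcases le_total c y with h2 | h2 <;>
      simp only [min_eq_left, min_eq_right, h1, h2] <;> rw [abs_le] <;>
      constructor <;> cases' abs_cases (x - y) with h h <;> linarith [h.1, h.2]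
  have h2 : |min 1 ((t - nm ε (m + zdir e)) / δ) - min 1 ((t - nm ε m) / δ)| ≤
      |(t - nm ε (m + zdir e)) / δ - (t - nm ε m) / δ| := habsmin _ _ _
  have hnum : |t - nm ε (m + zdir e) - (t - nm ε m)| ≤ ε := by
    rw [show t - nm ε (m + zdir e) - (t - nm ε m) = -(nm ε (m + zdir e) - nm ε m) by ring,
      abs_neg]
    exact nm_zdir_abs ε hε m e
  have h3 : |(t - nm ε (m + zdir e)) / δ - (t - nm ε m) / δ| ≤ ε / δ := by
    rw [div_sub_div_same, abs_div, abs_of_pos hδ]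
    gcongr
  linarith

/-- The discrete equation predicate. -/
def Leq (ε a : ℝ) (u : Idx d → ℝ) (m : Idx d) : Prop :=
  a * u m = ε⁻¹ ^ 2 * ∑ e : Fin d × Bool, (u (m + zdir e) - u m)

lemma sdir_true (μ : Fin d) : sdir d (μ, true) = Pi.single μ (1:ℝ) := by simp [sdir]

lemma sdir_false (μ : Fin d) : sdir d (μ, false) = -Pi.single μ (1:ℝ) := by
  simp [sdir, ← Pi.single_neg]

lemma latLap_toPt (ε : ℝ) (h : Pt d → ℝ) (m : Idx d) :
    latLap ε h (toPt ε m) =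
      ε⁻¹ ^ 2 * ∑ e : Fin d × Bool, ((fun n => h (toPt ε n)) (m + zdir e)
        - (fun n => h (toPt ε n)) m) := by
  rw [latLap, Fintype.sum_prod_type]
  congr 1
  apply Finset.sum_congr rfl
  intro μ _
  rw [Fintype.sum_bool]
  have e1 : toPt ε m + ε • (Pi.single μ 1 : Pt d) = toPt ε (m + zdir (μ, true)) := by
    rw [toPt_add, toPt_zdir, sdir_true]
  have e2 : toPt ε m - ε • (Pi.single μ 1 : Pt d) = toPt ε (m + zdir (μ, false)) := by
    rw [toPt_add, toPt_zdir, sdir_false]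
    module
  rw [e1, e2]
  ring

lemma eq_transfer (ε R a : ℝ) (hR : 0 < R) (f h : Pt d → ℝ)
    (hsol : IsDirSol ε (0 : Pt d) R a f h) (m : Idx d) (hm : nm ε m < R / 2) :
    Leq ε a (fun n => h (toPt ε n)) m := by
  have hx : toPt ε m ∈ UC ε (0 : Pt d) R :=
    ⟨(mem_cube_iff ε R hR m).mpr hm, Set.mem_range_self m⟩
  have := hsol.1 _ hx
  rw [Leq, ← latLap_toPt]
  simpa [sub_eq_zero] using this

lemma Leq_D (ε a : ℝ) (u : Idx d → ℝ) (e : Fin d × Bool) (m : Idx d)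
    (h1 : Leq ε a u m) (h2 : Leq ε a u (m + zdir e)) : Leq ε a (D ε e u) m := by
  rw [Leq] at h1 h2 ⊢
  have key : a * D ε e u m = ε⁻¹ * (a * u (m + zdir e)) - ε⁻¹ * (a * u m) := by
    rw [D]; ring
  rw [key, h1, h2]
  simp only [D, Finset.mul_sum, ← Finset.sum_sub_distrib]
  apply Finset.sum_congr rfl
  intro e' _
  rw [add_right_comm m (zdir e) (zdir e')]
  ring

lemma Leq_Dlist (ε a s : ℝ) (hε : 0 < ε) (u : Idx d → ℝ)
    (hu : ∀ m, nm ε m < s → Leq ε a u m) :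
    ∀ es : List (Fin d × Bool), ∀ m : Idx d, nm ε m < s - es.length * ε →
      Leq ε a (Dlist ε es u) m := by
  intro es
  induction es with
  | nil => intro m hm; exact hu m (by simpa using hm)
  | cons e es ih =>
      intro m hm
      simp only [List.length_cons] at hm
      push_cast at hm
      have hm' : nm ε m < s - es.length * ε := by nlinarith [hε.le]
      apply Leq_D
      · exact ih m hm'
      · apply ih
        have := nm_add_le ε hε.le m e
        nlinarith [hε.le]

end NormCut
section MaxP

attribute [local instance] Classical.propDecidable

variable {d : ℕ}

lemma toPt_zero (ε : ℝ) : toPt ε (0 : Idx d) = 0 := by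
  funext i; simp [toPt]

lemma nm_zero (ε : ℝ) : nm ε (0 : Idx d) = 0 := by simp [nm, toPt_zero]

lemma norm_toPt_sub (ε : ℝ) (hε : 0 < ε) (m : Idx d) (e : Fin d × Bool) :
    ‖toPt ε m - toPt ε (m + zdir e)‖ = ε := by
  rw [toPt_add, toPt_zdir]
  rw [show toPt ε m - (toPt ε m + ε • sdir d e) = -(ε • sdir d e) by ring]
  rw [norm_neg, norm_smul, norm_sdir, mul_one, Real.norm_eq_abs, abs_of_pos hε]

/-- box membership from norm bound -/
lemma mem_box_of_nm {ε T : ℝ} (hε : 0 < ε) {N : ℤ} (hN : T / ε ≤ (N : ℝ)) (m : Idx d)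
    (hm : nm ε m ≤ T) :
    m ∈ (Finset.Icc (fun _ => -N) (fun _ => N) : Finset (Idx d)) := by
  rw [Finset.mem_Icc]
  constructor <;> intro i <;>
  · have h1 := (coord_le_nm ε m i).trans hm
    rw [abs_mul, abs_of_pos hε] at h1
    have h2 : |(m i : ℝ)| ≤ T / ε := by
      rw [le_div_iff₀ hε, mul_comm]; exact h1
    have := h2.trans hN
    rw [abs_le] at this
    · first
      | (exact_mod_cast this.1)
      | (exact_mod_cast this.2)

lemma neighbor_clC (ε R : ℝ) (hε : 0 < ε) (m : Idx d) (e : Fin d × Bool)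
    (hm : toPt ε m ∈ UC ε (0 : Pt d) R) :
    toPt ε (m + zdir e) ∈ clC ε (0 : Pt d) R := by
  by_cases hU : toPt ε (m + zdir e) ∈ UC ε (0 : Pt d) R
  · exact Or.inl hU
  · exact Or.inr ⟨Set.mem_range_self _, hU, toPt ε m, hm, norm_toPt_sub ε hε m e⟩

lemma clC_nm (ε R : ℝ) (hε : 0 < ε) (hR : 0 < R) (m : Idx d)
    (hm : toPt ε m ∈ clC ε (0 : Pt d) R) : nm ε m < R / 2 + ε := by
  rcases hm with hU | hB
  · have := (mem_cube_iff ε R hR m).mp hU.1; linarith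
  · obtain ⟨-, -, x, hxU, hxy⟩ := hB
    obtain ⟨m', hm'⟩ := hxU.2
    have h1 : nm ε m' < R / 2 := (mem_cube_iff ε R hR m').mp (hm' ▸ hxU.1)
    have h2 : ‖toPt ε m‖ ≤ ‖x‖ + ε := by
      have h3 := norm_sub_le x (x - toPt ε m)
      rw [sub_sub_cancel, hxy] at h3
      exact h3
    rw [nm, hm'] at h1
    rw [nm]
    linarith

lemma bdry_nonempty (ε R : ℝ) (hd : 1 ≤ d) (hε : 0 < ε) (hR : 0 < R) :
    ∃ y, y ∈ bdryC ε (0 : Pt d) R := by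
  set N : ℤ := ⌈R / (2 * ε)⌉ + 1 with hNdef
  have hN : R / 2 / ε ≤ (N : ℝ) := by
    rw [hNdef]; push_cast
    have := Int.le_ceil (R / (2 * ε))
    have he : R / 2 / ε = R / (2 * ε) := by ring
    linarith
  set box : Finset (Idx d) := Finset.Icc (fun _ => -N) (fun _ => N) with hbox
  set S : Finset (Idx d) := box.filter (fun m => nm ε m < R / 2) with hS
  have hne : S.Nonempty := by
    refine ⟨0, Finset.mem_filter.mpr ⟨?_, by rw [nm_zero]; linarith⟩⟩
    exact mem_box_of_nm hε hN 0 (by rw [nm_zero]; positivity)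
  set i₀ : Fin d := ⟨0, hd⟩ with hi₀
  obtain ⟨m₀, hm₀, hmax⟩ := S.exists_max_image (fun m => m i₀) hne
  set e : Fin d × Bool := (i₀, true) with he
  refine ⟨toPt ε (m₀ + zdir e), Set.mem_range_self _, ?_, toPt ε m₀, ?_, ?_⟩
  · intro hU
    have h1 : nm ε (m₀ + zdir e) < R / 2 := (mem_cube_iff ε R hR _).mp hU.1
    have h2 : m₀ + zdir e ∈ S := Finset.mem_filter.mpr
      ⟨mem_box_of_nm hε hN _ h1.le, h1⟩
    have h3 := hmax _ h2
    have h4 : (m₀ + zdir e) i₀ = m₀ i₀ + 1 := by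
      simp [zdir, he, Pi.single_eq_same]
    omega
  · exact ⟨(mem_cube_iff ε R hR m₀).mpr (Finset.mem_filter.mp hm₀).2, Set.mem_range_self _⟩
  · exact norm_toPt_sub ε hε m₀ e

lemma isDirSol_neg (ε R a : ℝ) (f h : Pt d → ℝ) (hsol : IsDirSol ε (0 : Pt d) R a f h) :
    IsDirSol ε (0 : Pt d) R a (fun y => -f y) (fun y => -h y) := by
  constructor
  · intro x hx
    have h1 := hsol.1 x hx
    have h2 : latLap ε (fun y => -h y) x = -latLap ε h x := by
      rw [latLap, latLap, ← mul_neg, ← Finset.sum_neg_distrib]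
      congr 1
      apply Finset.sum_congr rfl
      intro μ _; ring
    show a * (-h x) - latLap ε (fun y => -h y) x = 0
    rw [h2]; linarith
  · intro x hx; have := hsol.2 x hx; simp [this]

lemma max_principle_one (ε R a F : ℝ) (hd : 1 ≤ d) (hε : 0 < ε) (hR : 0 < R)
    (ha : 0 ≤ a) (f h : Pt d → ℝ) (hsol : IsDirSol ε (0 : Pt d) R a f h)
    (hf : ∀ y ∈ bdryC ε (0 : Pt d) R, f y ≤ F) (hF : 0 ≤ F) :
    ∀ m : Idx d, toPt ε m ∈ clC ε (0 : Pt d) R → h (toPt ε m) ≤ F := by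
  set u : Idx d → ℝ := fun m => h (toPt ε m) with hu
  set N : ℤ := ⌈(R / 2 + ε) / ε⌉ + 1 with hNdef
  have hN : (R / 2 + ε) / ε ≤ (N : ℝ) := by
    rw [hNdef]; push_cast; linarith [Int.le_ceil ((R / 2 + ε) / ε)]
  set box : Finset (Idx d) := Finset.Icc (fun _ => -N) (fun _ => N) with hbox
  set S : Finset (Idx d) := box.filter (fun m => toPt ε m ∈ clC ε (0 : Pt d) R) with hS
  have hmem : ∀ m : Idx d, toPt ε m ∈ clC ε (0 : Pt d) R → m ∈ S := by
    intro m hm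
    exact Finset.mem_filter.mpr
      ⟨mem_box_of_nm hε hN m (clC_nm ε R hε hR m hm).le, hm⟩
  have hne : S.Nonempty := by
    refine ⟨0, hmem 0 (Or.inl ⟨?_, Set.mem_range_self _⟩)⟩
    exact (mem_cube_iff ε R hR 0).mpr (by rw [nm_zero]; linarith)
  set M : ℝ := S.sup' hne u with hM
  have hleM : ∀ m : Idx d, toPt ε m ∈ clC ε (0 : Pt d) R → u m ≤ M :=
    fun m hm => Finset.le_sup' u (hmem m hm)
  suffices hMF : M ≤ F by intro m hm; exact (hleM m hm).trans hMF
  rcases le_or_gt M 0 with hM0 | hM0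
  · linarith
  obtain ⟨mM, hmMS, hMeq⟩ := Finset.exists_mem_eq_sup' hne u
  set S' : Finset (Idx d) := S.filter (fun m => u m = M) with hS'
  have hne' : S'.Nonempty := ⟨mM, Finset.mem_filter.mpr ⟨hmMS, hMeq.symm⟩⟩
  set i₀ : Fin d := ⟨0, hd⟩ with hi₀
  obtain ⟨m₀, hm₀, hmax⟩ := S'.exists_max_image (fun m => m i₀) hne'
  have hm₀S := (Finset.mem_filter.mp hm₀).1
  have hm₀M : u m₀ = M := (Finset.mem_filter.mp hm₀).2
  have hm₀cl : toPt ε m₀ ∈ clC ε (0 : Pt d) R := (Finset.mem_filter.mp hm₀S).2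
  rcases hm₀cl with hU | hB
  swap
  · rw [← hm₀M]
    show h (toPt ε m₀) ≤ F
    rw [hsol.2 _ hB]
    exact hf _ hB
  -- interior case: contradiction
  exfalso
  have hLeq : Leq ε a u m₀ :=
    eq_transfer ε R a hR f h hsol m₀ ((mem_cube_iff ε R hR m₀).mp hU.1)
  rw [Leq] at hLeq
  have hsum : ∑ e : Fin d × Bool, (u (m₀ + zdir e) - u m₀) = ε ^ 2 * (a * u m₀) := by
    rw [hLeq]
    field_simp
  have hterm : ∀ e : Fin d × Bool, u (m₀ + zdir e) - u m₀ ≤ 0 := by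
    intro e
    have := hleM (m₀ + zdir e) (neighbor_clC ε R hε m₀ e hU)
    rw [hm₀M]; linarith
  have hsum0 : ∑ e : Fin d × Bool, (u (m₀ + zdir e) - u m₀) = 0 := by
    have h1 : ∑ e : Fin d × Bool, (u (m₀ + zdir e) - u m₀) ≤ 0 :=
      Finset.sum_nonpos (fun e _ => hterm e)
    have h2 : 0 ≤ ε ^ 2 * (a * u m₀) := by
      rw [hm₀M]; positivity
    linarith [hsum ▸ h2]
  have hall := (Finset.sum_eq_zero_iff_of_nonpos (fun e _ => hterm e)).mp hsum0
  set e : Fin d × Bool := (i₀, true) with he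
  have heq0 := hall e (Finset.mem_univ e)
  have hnb : u (m₀ + zdir e) = M := by rw [hm₀M] at heq0; linarith
  have hnbS' : m₀ + zdir e ∈ S' := Finset.mem_filter.mpr
    ⟨hmem _ (neighbor_clC ε R hε m₀ e hU), hnb⟩
  have h3 := hmax _ hnbS'
  have h4 : (m₀ + zdir e) i₀ = m₀ i₀ + 1 := by
    simp [zdir, he, Pi.single_eq_same]
  omega

lemma max_principle (ε R a F : ℝ) (hd : 1 ≤ d) (hε : 0 < ε) (hR : 0 < R)
    (ha : 0 ≤ a) (f h : Pt d → ℝ) (hsol : IsDirSol ε (0 : Pt d) R a f h)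
    (hf : ∀ y ∈ bdryC ε (0 : Pt d) R, |f y| ≤ F) :
    ∀ m : Idx d, toPt ε m ∈ clC ε (0 : Pt d) R → |h (toPt ε m)| ≤ F := by
  have hF : 0 ≤ F := by
    obtain ⟨y, hy⟩ := bdry_nonempty ε R hd hε hR
    exact (abs_nonneg _).trans (hf y hy)
  intro m hm
  rw [abs_le]
  constructor
  · have hneg := max_principle_one ε R a F hd hε hR ha _ _ (isDirSol_neg ε R a f h hsol)
      (fun y hy => by
        have h1 := abs_le.mp (hf y hy)
        show -f y ≤ F
        linarith [h1.1]) hF m hm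
    have h2 : -h (toPt ε m) ≤ F := hneg
    linarith
  · exact max_principle_one ε R a F hd hε hR ha f h hsol
      (fun y hy => (le_abs_self _).trans (hf y hy)) hF m hm

end MaxP
section Cacc

attribute [local instance] Classical.propDecidable

variable {d : ℕ}

lemma ptwise (P Q U V : ℝ) (hP : 0 ≤ P) (hQ : 0 ≤ Q) :
    0 ≤ (V-U)^2 * Q^2 + 2*U*(V-U)*(Q+P)*(Q-P) + 7*U^2*(Q-P)^2 + V^2*(Q-P)^2 := by
  nlinarith [sq_nonneg ((V-U)*Q - 2*U*(Q-P)), sq_nonneg ((V-U)*Q + 2*U*(Q-P)),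
    sq_nonneg ((V+U)*(Q-P)), sq_nonneg ((V-U)*(Q-P)), sq_nonneg (U*(Q-P)), sq_nonneg (V*(Q-P)),
    mul_nonneg hP hQ, sq_nonneg (Q-P), sq_nonneg U, sq_nonneg V,
    mul_nonneg (mul_nonneg hP hQ) (sq_nonneg (V-U)),
    mul_nonneg (mul_nonneg hP hQ) (sq_nonneg U),
    mul_nonneg (mul_nonneg hP hQ) (sq_nonneg (Q-P))]

lemma ptwise2 (ε P Q U V : ℝ) (hε : 0 < ε) (hP : 0 ≤ P) (hQ : 0 ≤ Q) :
    4⁻¹ * ((ε⁻¹*(V-U))^2 * Q^2)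
      ≤ 2⁻¹ * ε⁻¹^2 * ((V - U) * (V*Q^2 - U*P^2))
        + (7/4) * U^2 * (ε⁻¹*(Q-P))^2 + 4⁻¹ * V^2 * (ε⁻¹*(Q-P))^2 := by
  have h := ptwise P Q U V hP hQ
  have h2 : (0:ℝ) ≤ ε⁻¹^2 := by positivity
  nlinarith [mul_nonneg h2 h]

lemma caccioppoli (ε a L : ℝ) (hε : 0 < ε) (ha : 0 ≤ a)
    (u φ : Idx d → ℝ) (B A : Finset (Idx d)) (hAB : A ⊆ B)
    (hφ0 : ∀ m, 0 ≤ φ m)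
    (heq : ∀ m, φ m ≠ 0 → Leq ε a u m)
    (hLip : ∀ m e, |φ (m + zdir e) - φ m| ≤ ε * L)
    (hA : ∀ m (e : Fin d × Bool), φ (m + zdir e) ≠ φ m → m ∈ A ∧ m + zdir e ∈ A)
    (hB : ∀ m, φ m ≠ 0 → ∀ e : Fin d × Bool, m ∈ B ∧ m + zdir e ∈ B ∧ m - zdir e ∈ B) :
    a * ∑ m ∈ B, (u m * φ m) ^ 2
      + 4⁻¹ * ∑ e : Fin d × Bool, ∑ m ∈ B, (D ε e u m)^2 * (φ (m + zdir e))^2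
    ≤ 2 * (2 * d) * L^2 * ∑ m ∈ A, (u m)^2 := by
  set v : Idx d → ℝ := fun m => u m * φ m ^ 2 with hv
  -- step 0 : the tested equation
  have step0 : ∑ m ∈ B,
      (a * u m - ε⁻¹ ^ 2 * ∑ e : Fin d × Bool, (u (m + zdir e) - u m)) * v m = 0 := by
    apply Finset.sum_eq_zero
    intro m _
    by_cases hφ : φ m = 0
    · simp [hv, hφ]
    · have hl := heq m hφ
      rw [Leq] at hl
      rw [show a * u m - ε⁻¹ ^ 2 * ∑ e : Fin d × Bool, (u (m + zdir e) - u m) =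
        a * u m - ε⁻¹ ^ 2 * ∑ e : Fin d × Bool, (u (m + zdir e) - u m) from rfl, hl]
      ring
  -- step I
  have stepI : a * ∑ m ∈ B, (u m * φ m)^2
      = ε⁻¹^2 * ∑ e : Fin d × Bool, ∑ m ∈ B, (u (m + zdir e) - u m) * v m := by
    have h1 : ∑ m ∈ B, (a * u m * v m)
        - ∑ m ∈ B, (ε⁻¹^2 * (∑ e : Fin d × Bool, (u (m + zdir e) - u m)) * v m) = 0 := by
      rw [← Finset.sum_sub_distrib, ← step0]
      apply Finset.sum_congr rfl
      intro m _; ring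
    have h2 : a * ∑ m ∈ B, (u m * φ m)^2 = ∑ m ∈ B, (a * u m * v m) := by
      rw [Finset.mul_sum]
      apply Finset.sum_congr rfl
      intro m _; simp only [hv]; ring
    have h3 : ∑ m ∈ B, (ε⁻¹^2 * (∑ e : Fin d × Bool, (u (m + zdir e) - u m)) * v m)
        = ε⁻¹^2 * ∑ e : Fin d × Bool, ∑ m ∈ B, (u (m + zdir e) - u m) * v m := by
      have hstep : ∀ m ∈ B, (ε⁻¹^2 * (∑ e : Fin d × Bool, (u (m + zdir e) - u m)) * v m)
          = ∑ e : Fin d × Bool, ε⁻¹^2 * ((u (m + zdir e) - u m) * v m) := by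
        intro m _
        rw [mul_assoc, Finset.sum_mul, Finset.mul_sum]
      rw [Finset.sum_congr rfl hstep, Finset.sum_comm]
      simp only [← Finset.mul_sum]
    rw [h2, ← h3]
    linarith [h1]
  -- step II : shift
  have stepII : ∑ e : Fin d × Bool, ∑ m ∈ B, (u (m + zdir e) - u m) * v (m + zdir e)
      = - ∑ e : Fin d × Bool, ∑ m ∈ B, (u (m + zdir e) - u m) * v m := by
    have hshift : ∀ e : Fin d × Bool,
        ∑ m ∈ B, (u (m + zdir e) - u m) * v (m + zdir e)
        = ∑ m ∈ B, (u m - u (m - zdir e)) * v m := by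
      intro e
      have hsupp : ∀ m : Idx d, (u m - u (m - zdir e)) * v m ≠ 0 →
          m ∈ B ∧ m - zdir e ∈ B := by
        intro m hm
        have hφm : φ m ≠ 0 := by
          intro h0; apply hm; simp [hv, h0]
        exact ⟨(hB m hφm e).1, (hB m hφm e).2.2⟩
      have := sum_shift (B := B) (g := fun m => (u m - u (m - zdir e)) * v m)
        (t := zdir e) hsupp
      rw [← this]
      apply Finset.sum_congr rfl
      intro m _
      simp only [add_sub_cancel_right]
    rw [Finset.sum_congr rfl (fun e _ => hshift e)]
    rw [← sum_dflip (fun e => ∑ m ∈ B, (u m - u (m - zdir e)) * v m)]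
    rw [← Finset.sum_neg_distrib]
    apply Finset.sum_congr rfl
    intro e _
    rw [← Finset.sum_neg_distrib]
    apply Finset.sum_congr rfl
    intro m _
    rw [zdir_flip, sub_neg_eq_add]
    ring
  -- step III
  have stepIII : ∑ e : Fin d × Bool, ∑ m ∈ B, (u (m + zdir e) - u m) * v m
      = -(2⁻¹) * ∑ e : Fin d × Bool, ∑ m ∈ B,
          (u (m + zdir e) - u m) * (v (m + zdir e) - v m) := by
    have hexp : ∑ e : Fin d × Bool, ∑ m ∈ B, (u (m + zdir e) - u m) * (v (m + zdir e) - v m)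
        = ∑ e : Fin d × Bool, ∑ m ∈ B, (u (m + zdir e) - u m) * v (m + zdir e)
          - ∑ e : Fin d × Bool, ∑ m ∈ B, (u (m + zdir e) - u m) * v m := by
      rw [← Finset.sum_sub_distrib]
      apply Finset.sum_congr rfl
      intro e _
      rw [← Finset.sum_sub_distrib]
      apply Finset.sum_congr rfl
      intro m _; ring
    rw [hexp, stepII]; ring
  -- the pointwise inequality, summed
  have key : ∀ (e : Fin d × Bool) (m : Idx d),
      4⁻¹ * ((D ε e u m)^2 * (φ (m + zdir e))^2)
      ≤ 2⁻¹ * ε⁻¹^2 * ((u (m + zdir e) - u m) * (v (m + zdir e) - v m))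
        + ((7/4) * (u m)^2 * (ε⁻¹*(φ (m + zdir e) - φ m))^2
          + 4⁻¹ * (u (m + zdir e))^2 * (ε⁻¹*(φ (m + zdir e) - φ m))^2) := by
    intro e m
    have h := ptwise2 ε (φ m) (φ (m + zdir e)) (u m) (u (m + zdir e)) hε
      (hφ0 m) (hφ0 (m + zdir e))
    have hveq : v (m + zdir e) - v m
        = u (m + zdir e) * (φ (m + zdir e))^2 - u m * (φ m)^2 := by
      simp [hv]
    rw [hveq]
    rw [D]
    linarith [h]
  have sum_key : 4⁻¹ * ∑ e : Fin d × Bool, ∑ m ∈ B, (D ε e u m)^2 * (φ (m + zdir e))^2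
      ≤ 2⁻¹ * ε⁻¹^2 * ∑ e : Fin d × Bool, ∑ m ∈ B,
          (u (m + zdir e) - u m) * (v (m + zdir e) - v m)
        + ∑ e : Fin d × Bool, ∑ m ∈ B,
          ((7/4) * (u m)^2 * (ε⁻¹*(φ (m + zdir e) - φ m))^2
            + 4⁻¹ * (u (m + zdir e))^2 * (ε⁻¹*(φ (m + zdir e) - φ m))^2) := by
    rw [Finset.mul_sum, Finset.mul_sum, ← Finset.sum_add_distrib]
    apply Finset.sum_le_sum
    intro e _
    rw [Finset.mul_sum, Finset.mul_sum, ← Finset.sum_add_distrib]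
    apply Finset.sum_le_sum
    intro m _
    exact key e m
  -- tail bound
  have hsq : ∀ (x y : ℝ), |y - x| ≤ ε * L → (ε⁻¹ * (y - x))^2 ≤ L^2 := by
    intro x y h1
    have h2 : |ε⁻¹ * (y - x)| ≤ L := by
      rw [abs_mul, abs_of_pos (inv_pos.mpr hε)]
      calc ε⁻¹ * |y - x| ≤ ε⁻¹ * (ε * L) := by
            apply mul_le_mul_of_nonneg_left h1 (inv_pos.mpr hε).le
      _ = L := by rw [← mul_assoc, inv_mul_cancel₀ hε.ne', one_mul]
    have h3 := abs_le.mp h2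
    exact sq_le_sq' (by linarith [h3.1]) h3.2
  have hL2 : 0 ≤ L^2 := sq_nonneg L
  have tail : ∑ e : Fin d × Bool, ∑ m ∈ B,
      ((7/4) * (u m)^2 * (ε⁻¹*(φ (m + zdir e) - φ m))^2
        + 4⁻¹ * (u (m + zdir e))^2 * (ε⁻¹*(φ (m + zdir e) - φ m))^2)
      ≤ 2 * (2 * d) * L^2 * ∑ m ∈ A, (u m)^2 := by
    have hTe : ∀ e : Fin d × Bool, ∑ m ∈ B,
        ((7/4) * (u m)^2 * (ε⁻¹*(φ (m + zdir e) - φ m))^2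
          + 4⁻¹ * (u (m + zdir e))^2 * (ε⁻¹*(φ (m + zdir e) - φ m))^2)
        ≤ 2 * L^2 * ∑ m ∈ A, (u m)^2 := by
      intro e
      -- shift the second summand
      have hshift2 : ∑ m ∈ B, (u (m + zdir e))^2 * (ε⁻¹*(φ (m + zdir e) - φ m))^2
          = ∑ m ∈ B, (u m)^2 * (ε⁻¹*(φ m - φ (m - zdir e)))^2 := by
        have hsupp : ∀ m : Idx d, (u m)^2 * (ε⁻¹*(φ m - φ (m - zdir e)))^2 ≠ 0 →
            m ∈ B ∧ m - zdir e ∈ B := by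
          intro m hm
          have hne : φ m ≠ φ (m - zdir e) := by
            intro h0; apply hm; rw [h0]; simp
          by_cases h1 : φ m = 0
          · have h2 : φ (m - zdir e) ≠ 0 := fun hc => hne (by rw [h1, hc])
            have h3 := hB (m - zdir e) h2 e
            rw [sub_add_cancel] at h3
            exact ⟨h3.2.1, h3.1⟩
          · exact ⟨(hB m h1 e).1, (hB m h1 e).2.2⟩
        have := sum_shift (B := B)
          (g := fun m => (u m)^2 * (ε⁻¹*(φ m - φ (m - zdir e)))^2) (t := zdir e) hsupp
        rw [← this]
        apply Finset.sum_congr rfl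
        intro m _
        simp only [add_sub_cancel_right]
      have hcomb : ∑ m ∈ B,
          ((7/4) * (u m)^2 * (ε⁻¹*(φ (m + zdir e) - φ m))^2
            + 4⁻¹ * (u (m + zdir e))^2 * (ε⁻¹*(φ (m + zdir e) - φ m))^2)
          = ∑ m ∈ B, (u m)^2 * ((7/4) * (ε⁻¹*(φ (m + zdir e) - φ m))^2
            + 4⁻¹ * (ε⁻¹*(φ m - φ (m - zdir e)))^2) := by
        rw [Finset.sum_add_distrib]
        have h4 : ∑ m ∈ B, 4⁻¹ * ((u (m + zdir e))^2 * (ε⁻¹*(φ (m + zdir e) - φ m))^2)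
            = ∑ m ∈ B, 4⁻¹ * ((u m)^2 * (ε⁻¹*(φ m - φ (m - zdir e)))^2) := by
          rw [← Finset.mul_sum, ← Finset.mul_sum, hshift2]
        calc ∑ m ∈ B, (7/4) * (u m)^2 * (ε⁻¹*(φ (m + zdir e) - φ m))^2
              + ∑ m ∈ B, 4⁻¹ * (u (m + zdir e))^2 * (ε⁻¹*(φ (m + zdir e) - φ m))^2
            = ∑ m ∈ B, (7/4) * (u m)^2 * (ε⁻¹*(φ (m + zdir e) - φ m))^2
              + ∑ m ∈ B, 4⁻¹ * ((u m)^2 * (ε⁻¹*(φ m - φ (m - zdir e)))^2) := by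
              rw [← h4]
              congr 1
              apply Finset.sum_congr rfl
              intro m _; ring
        _ = _ := by
              rw [← Finset.sum_add_distrib]
              apply Finset.sum_congr rfl
              intro m _; ring
      rw [hcomb]
      -- restrict support to A
      have hsuppA : ∀ m : Idx d, (u m)^2 * ((7/4) * (ε⁻¹*(φ (m + zdir e) - φ m))^2
          + 4⁻¹ * (ε⁻¹*(φ m - φ (m - zdir e)))^2) ≠ 0 → m ∈ A := by
        intro m hm
        by_cases h1 : φ (m + zdir e) = φ m
        · have h2 : φ m ≠ φ (m - zdir e) := by
            intro h0
            apply hm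
            rw [h1, h0]
            simp
          have h3 := hA (m - zdir e) e (by rw [sub_add_cancel]; exact h2)
          rw [sub_add_cancel] at h3
          exact h3.2
        · exact (hA m e h1).1
      have heqA : ∑ m ∈ B, (u m)^2 * ((7/4) * (ε⁻¹*(φ (m + zdir e) - φ m))^2
            + 4⁻¹ * (ε⁻¹*(φ m - φ (m - zdir e)))^2)
          = ∑ m ∈ A, (u m)^2 * ((7/4) * (ε⁻¹*(φ (m + zdir e) - φ m))^2
            + 4⁻¹ * (ε⁻¹*(φ m - φ (m - zdir e)))^2) := by
        apply sum_eq_sum_of_support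
        · intro m hm; exact hAB (hsuppA m hm)
        · intro m hm; exact hsuppA m hm
      rw [heqA, Finset.mul_sum]
      apply Finset.sum_le_sum
      intro m _
      have hb1 : (ε⁻¹*(φ (m + zdir e) - φ m))^2 ≤ L^2 := hsq _ _ (hLip m e)
      have hb2 : (ε⁻¹*(φ m - φ (m - zdir e)))^2 ≤ L^2 := by
        have := hLip (m - zdir e) e
        rw [sub_add_cancel] at this
        exact hsq _ _ this
      have hu2 : (0:ℝ) ≤ (u m)^2 := sq_nonneg _
      calc (u m)^2 * ((7/4) * (ε⁻¹*(φ (m + zdir e) - φ m))^2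
            + 4⁻¹ * (ε⁻¹*(φ m - φ (m - zdir e)))^2)
          ≤ (u m)^2 * ((7/4) * L^2 + 4⁻¹ * L^2) := by
            apply mul_le_mul_of_nonneg_left _ hu2
            have t1 : (7/4 : ℝ) * (ε⁻¹*(φ (m + zdir e) - φ m))^2 ≤ (7/4) * L^2 := by linarith
            have t2 : (4⁻¹ : ℝ) * (ε⁻¹*(φ m - φ (m - zdir e)))^2 ≤ 4⁻¹ * L^2 := by linarith
            linarith
      _ = 2 * L^2 * (u m)^2 := by ring
    calc ∑ e : Fin d × Bool, ∑ m ∈ B,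
        ((7/4) * (u m)^2 * (ε⁻¹*(φ (m + zdir e) - φ m))^2
          + 4⁻¹ * (u (m + zdir e))^2 * (ε⁻¹*(φ (m + zdir e) - φ m))^2)
        ≤ ∑ _e : Fin d × Bool, 2 * L^2 * ∑ m ∈ A, (u m)^2 :=
          Finset.sum_le_sum (fun e _ => hTe e)
    _ = 2 * (2 * d) * L^2 * ∑ m ∈ A, (u m)^2 := by
        rw [Finset.sum_const, Finset.card_univ]
        simp [Fintype.card_prod]
        ring
  -- combine
  have hid : a * ∑ m ∈ B, (u m * φ m)^2
      + 2⁻¹ * ε⁻¹^2 * ∑ e : Fin d × Bool, ∑ m ∈ B,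
          (u (m + zdir e) - u m) * (v (m + zdir e) - v m) = 0 := by
    rw [stepI, stepIII]; ring
  linarith [sum_key, tail, hid]

end Cacc
section Iter

attribute [local instance] Classical.propDecidable

variable {d : ℕ}

lemma cut_facts (ε δ a t : ℝ) (hε : 0 < ε) (hδ : 0 < δ) (ha : 0 ≤ a)
    (u : Idx d → ℝ) (B A : Finset (Idx d)) (hAB : A ⊆ B)
    (heq : ∀ m, nm ε m < t → Leq ε a u m)
    (hAmem : ∀ m, nm ε m < t + ε → m ∈ A)
    (hBmem : ∀ m, nm ε m < t + ε → m ∈ B) :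
    a * ∑ m ∈ B, (u m * cut ε δ t m) ^ 2
      + 4⁻¹ * ∑ e : Fin d × Bool, ∑ m ∈ B, (D ε e u m)^2 * (cut ε δ t (m + zdir e))^2
    ≤ 2 * (2 * d) * (1/δ)^2 * ∑ m ∈ A, (u m)^2 := by
  apply caccioppoli ε a (1/δ) hε ha u (cut ε δ t) B A hAB
  · exact fun m => cut_nonneg ε δ t m
  · exact fun m hm => heq m (cut_ne_zero ε δ t hδ m hm)
  · intro m e
    have := cut_lip ε δ t hδ hε.le m e
    calc |cut ε δ t (m + zdir e) - cut ε δ t m| ≤ ε / δ := this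
    _ = ε * (1/δ) := by ring
  · intro m e hne
    have hmin : nm ε m < t + ε := by
      by_cases h0 : cut ε δ t m = 0
      · have h1 : cut ε δ t (m + zdir e) ≠ 0 := fun hc => hne (hc.trans h0.symm)
        have := cut_ne_zero ε δ t hδ _ h1
        have h2 := nm_le_add ε hε.le m e
        linarith
      · have := cut_ne_zero ε δ t hδ m h0
        linarith
    have hmin2 : nm ε (m + zdir e) < t + ε := by
      by_cases h0 : cut ε δ t (m + zdir e) = 0
      · have h1 : cut ε δ t m ≠ 0 := fun hc => hne (h0.trans hc.symm)
        have := cut_ne_zero ε δ t hδ m h1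
        have h2 := nm_add_le ε hε.le m e
        linarith
      · have := cut_ne_zero ε δ t hδ _ h0
        linarith
    exact ⟨hAmem m hmin, hAmem _ hmin2⟩
  · intro m hm e
    have h1 := cut_ne_zero ε δ t hδ m hm
    have h2 := nm_add_le ε hε.le m e
    have h3 : nm ε (m - zdir e) ≤ nm ε m + ε := by
      have : m - zdir e = m + zdir (dflip e) := by rw [zdir_flip, ← sub_eq_add_neg]
      rw [this]
      exact nm_add_le ε hε.le m (dflip e)
    exact ⟨hBmem m (by linarith), hBmem _ (by linarith), hBmem _ (by linarith)⟩

lemma cacc_interior (ε δ a t : ℝ) (hε : 0 < ε) (hδ : 0 < δ) (ha : 0 ≤ a)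
    (u : Idx d → ℝ) (B A G : Finset (Idx d)) (hAB : A ⊆ B) (hGB : G ⊆ B)
    (heq : ∀ m, nm ε m < t → Leq ε a u m)
    (hAmem : ∀ m, nm ε m < t + ε → m ∈ A)
    (hBmem : ∀ m, nm ε m < t + ε → m ∈ B)
    (hG : ∀ m ∈ G, nm ε m ≤ t - δ - ε) :
    ∑ e : Fin d × Bool, ∑ m ∈ G, (D ε e u m)^2
      ≤ 16 * d * (1/δ)^2 * ∑ m ∈ A, (u m)^2 := by
  have hc := cut_facts ε δ a t hε hδ ha u B A hAB heq hAmem hBmem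
  have h0 : 0 ≤ a * ∑ m ∈ B, (u m * cut ε δ t m) ^ 2 :=
    mul_nonneg ha (Finset.sum_nonneg (fun m _ => sq_nonneg _))
  have hsub : ∑ e : Fin d × Bool, ∑ m ∈ G, (D ε e u m)^2
      ≤ ∑ e : Fin d × Bool, ∑ m ∈ B, (D ε e u m)^2 * (cut ε δ t (m + zdir e))^2 := by
    apply Finset.sum_le_sum
    intro e _
    have heq1 : ∑ m ∈ G, (D ε e u m)^2
        = ∑ m ∈ G, (D ε e u m)^2 * (cut ε δ t (m + zdir e))^2 := by
      apply Finset.sum_congr rfl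
      intro m hm
      have h1 : nm ε (m + zdir e) ≤ t - δ := by
        have := nm_add_le ε hε.le m e
        have := hG m hm
        linarith
      rw [cut_eq_one ε δ t hδ _ h1]
      ring
    rw [heq1]
    apply Finset.sum_le_sum_of_subset_of_nonneg hGB
    intro m _ _
    exact mul_nonneg (sq_nonneg _) (sq_nonneg _)
  linarith

lemma cacc_mass (ε δ a t : ℝ) (hε : 0 < ε) (hδ : 0 < δ) (ha : 0 ≤ a)
    (u : Idx d → ℝ) (B A G : Finset (Idx d)) (hAB : A ⊆ B) (hGB : G ⊆ B)
    (heq : ∀ m, nm ε m < t → Leq ε a u m)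
    (hAmem : ∀ m, nm ε m < t + ε → m ∈ A)
    (hBmem : ∀ m, nm ε m < t + ε → m ∈ B)
    (hG : ∀ m ∈ G, nm ε m ≤ t - δ) :
    a * ∑ m ∈ G, (u m)^2 ≤ 4 * d * (1/δ)^2 * ∑ m ∈ A, (u m)^2 := by
  have hc := cut_facts ε δ a t hε hδ ha u B A hAB heq hAmem hBmem
  have h0 : 0 ≤ 4⁻¹ * ∑ e : Fin d × Bool, ∑ m ∈ B, (D ε e u m)^2 * (cut ε δ t (m + zdir e))^2 := by
    apply mul_nonneg (by norm_num)
    apply Finset.sum_nonneg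
    intro e _
    exact Finset.sum_nonneg (fun m _ => mul_nonneg (sq_nonneg _) (sq_nonneg _))
  have hsub : ∑ m ∈ G, (u m)^2 ≤ ∑ m ∈ B, (u m * cut ε δ t m)^2 := by
    have heq1 : ∑ m ∈ G, (u m)^2 = ∑ m ∈ G, (u m * cut ε δ t m)^2 := by
      apply Finset.sum_congr rfl
      intro m hm
      rw [cut_eq_one ε δ t hδ _ (hG m hm)]
      ring
    rw [heq1]
    exact Finset.sum_le_sum_of_subset_of_nonneg hGB (fun m _ _ => sq_nonneg _)
  have h2 : a * ∑ m ∈ G, (u m)^2 ≤ a * ∑ m ∈ B, (u m * cut ε δ t m)^2 :=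
    mul_le_mul_of_nonneg_left hsub ha
  linarith

lemma count_bound (ε T : ℝ) (hε : 0 < ε) (hε1 : ε ≤ 1) (hT : 0 < T) (S : Finset (Idx d))
    (hS : ∀ m ∈ S, nm ε m ≤ T) :
    (ε : ℝ)^d * S.card ≤ (2*T + 3)^d := by
  set N : ℤ := ⌈T / ε⌉ with hN
  have hN0 : 0 ≤ N := Int.ceil_nonneg (by positivity)
  have hNle : (N : ℝ) ≤ T / ε + 1 := by
    rw [hN]; linarith [Int.ceil_lt_add_one (T / ε)]
  have hsub : S ⊆ (Finset.Icc (fun _ => -N) (fun _ => N) : Finset (Idx d)) := by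
    intro m hm
    exact mem_box_of_nm hε (Int.le_ceil _) m (hS m hm)
  have hcard : (S.card : ℝ) ≤ ((2*N+1).toNat : ℝ)^d := by
    have h1 := Finset.card_le_card hsub
    have h2 : (Finset.Icc (fun _ => -N) (fun _ => N) : Finset (Idx d)).card
        = ((2*N+1).toNat)^d := by
      rw [Pi.card_Icc]
      simp [Int.card_Icc]
      congr 1
      omega
    calc (S.card : ℝ) ≤ ((Finset.Icc (fun _ => -N) (fun _ => N) : Finset (Idx d)).card : ℝ) := by
          exact_mod_cast h1
    _ = ((2*N+1).toNat : ℝ)^d := by rw [h2]; push_cast; ring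
  have htn : ((2*N+1).toNat : ℝ) = 2*(N:ℝ)+1 := by
    have h5 : (0:ℤ) ≤ 2*N+1 := by omega
    have h6 : ((2*N+1).toNat : ℤ) = 2*N+1 := Int.toNat_of_nonneg h5
    calc ((2*N+1).toNat : ℝ) = (((2*N+1).toNat : ℤ) : ℝ) := by push_cast; ring
    _ = ((2*N+1 : ℤ) : ℝ) := by rw [h6]
    _ = 2*(N:ℝ)+1 := by push_cast; ring
  have hkey : ε * (2*(N:ℝ)+1) ≤ 2*T + 3 := by
    have h1 : ε * (N:ℝ) ≤ T + ε := by
      calc ε * (N:ℝ) ≤ ε * (T/ε + 1) := by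
            apply mul_le_mul_of_nonneg_left hNle hε.le
      _ = T + ε := by field_simp
    nlinarith
  calc (ε:ℝ)^d * S.card ≤ ε^d * ((2*N+1).toNat : ℝ)^d := by
        apply mul_le_mul_of_nonneg_left hcard (by positivity)
  _ = (ε * (2*(N:ℝ)+1))^d := by rw [htn, mul_pow]
  _ ≤ (2*T + 3)^d := by
      apply pow_le_pow_left₀ (by positivity) hkey

lemma iter_bound (ε δ a R' : ℝ) (hε : 0 < ε) (hδ : 0 < δ) (ha : 0 ≤ a)
    (hεδ : ε ≤ δ/2) (u : Idx d → ℝ) (B : Finset (Idx d))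
    (hBmem : ∀ m, nm ε m < R' + 3*δ → m ∈ B)
    (heq : ∀ m, nm ε m < R' + 3*δ → Leq ε a u m) :
    ∀ es : List (Fin d × Bool), ∀ s : ℝ, 0 < s → s + 2*es.length*δ ≤ R' →
      ∑ m ∈ B.filter (fun m => nm ε m ≤ s), (Dlist ε es u m)^2
        ≤ (16*(d:ℝ)*(1/δ)^2)^es.length
          * ∑ m ∈ B.filter (fun m => nm ε m ≤ s + 2*es.length*δ), (u m)^2 := by
  intro es
  induction es with
  | nil =>
      intro s hs hsR
      simp only [Dlist, List.length_nil, Nat.cast_zero, pow_zero, one_mul]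
      have : s + 2*(0:ℝ)*δ = s := by ring
      rw [this]
  | cons e es ih =>
      intro s hs hsR
      simp only [List.length_cons] at hsR ⊢
      push_cast at hsR ⊢
      set n : ℕ := es.length with hn
      set t : ℝ := s + δ + ε with ht
      set G : Finset (Idx d) := B.filter (fun m => nm ε m ≤ s) with hG
      set A : Finset (Idx d) := B.filter (fun m => nm ε m ≤ s + δ + 2*ε) with hA
      have hcast : (0:ℝ) ≤ (n:ℝ) := Nat.cast_nonneg n
      have hnd : (0:ℝ) ≤ (n:ℝ) * δ := mul_nonneg hcast hδ.le
      have hne2 : (0:ℝ) ≤ (n:ℝ) * (δ - ε) :=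
        mul_nonneg hcast (by linarith)
      have hsR' : s + 2*δ ≤ R' := by nlinarith
      have heqv : ∀ m, nm ε m < t → Leq ε a (Dlist ε es u) m := by
        intro m hm
        apply Leq_Dlist ε a (R' + 3*δ) hε u heq es m
        have hlen : ((es.length : ℕ) : ℝ) = (n : ℝ) := by rw [hn]
        rw [hlen]
        have hm' : nm ε m < s + δ + ε := hm
        nlinarith [hm', hεδ, hδ, hε.le]
      have hsingle : ∑ m ∈ G, (Dlist ε (e :: es) u m)^2
          ≤ ∑ e' : Fin d × Bool, ∑ m ∈ G, (D ε e' (Dlist ε es u) m)^2 := by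
        have : ∑ m ∈ G, (Dlist ε (e :: es) u m)^2
            = ∑ m ∈ G, (D ε e (Dlist ε es u) m)^2 := rfl
        rw [this]
        apply Finset.single_le_sum (f := fun e' => ∑ m ∈ G, (D ε e' (Dlist ε es u) m)^2)
          (fun e' _ => Finset.sum_nonneg (fun m _ => sq_nonneg _)) (Finset.mem_univ e)
      have hint := cacc_interior ε δ a t hε hδ ha (Dlist ε es u) B A G
        (Finset.filter_subset _ _) (Finset.filter_subset _ _) heqv
        (fun m hm => Finset.mem_filter.mpr
          ⟨hBmem m (by rw [ht] at hm; linarith), by rw [ht] at hm; linarith⟩)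
        (fun m hm => hBmem m (by rw [ht] at hm; linarith))
        (fun m hm => by
          have := (Finset.mem_filter.mp hm).2
          rw [ht]; linarith)
      have hAsub : ∑ m ∈ A, (Dlist ε es u m)^2
          ≤ ∑ m ∈ B.filter (fun m => nm ε m ≤ s + 2*δ), (Dlist ε es u m)^2 := by
        apply Finset.sum_le_sum_of_subset_of_nonneg
        · intro m hm
          have h1 := Finset.mem_filter.mp hm
          exact Finset.mem_filter.mpr ⟨h1.1, by linarith [h1.2]⟩
        · intro m _ _; exact sq_nonneg _
      have hih := ih (s + 2*δ) (by linarith) (by linarith)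
      have hc : (0:ℝ) ≤ 16*(d:ℝ)*(1/δ)^2 := by positivity
      calc ∑ m ∈ G, (Dlist ε (e :: es) u m)^2
          ≤ 16*(d:ℝ)*(1/δ)^2 * ∑ m ∈ A, (Dlist ε es u m)^2 := le_trans hsingle hint
      _ ≤ 16*(d:ℝ)*(1/δ)^2 * ((16*(d:ℝ)*(1/δ)^2)^n
            * ∑ m ∈ B.filter (fun m => nm ε m ≤ s + 2*δ + 2*(n:ℝ)*δ), (u m)^2) := by
          apply mul_le_mul_of_nonneg_left _ hc
          exact le_trans hAsub hih
      _ = (16*(d:ℝ)*(1/δ)^2)^(n+1)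
            * ∑ m ∈ B.filter (fun m => nm ε m ≤ s + 2*((n:ℝ)+1)*δ), (u m)^2 := by
          rw [pow_succ]
          have : s + 2*δ + 2*(n:ℝ)*δ = s + 2*((n:ℝ)+1)*δ := by ring
          rw [this]
          ring

end Iter
set_option maxHeartbeats 2000000 in
/-- Proposition 5.2, lattice elliptic regularity. -/
theorem lattice_elliptic_regularity (d k : ℕ) (hd : 1 ≤ d) (R : ℝ) (hR : 0 < R)
    (Ω : Set (Pt d)) (hΩo : IsOpen Ω) (hΩc : IsConnected Ω)
    (hΩs : Ω ⊆ cubeC (0 : Pt d) (R / 4)) :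
    ∃ ε₀ C : ℝ, 0 < ε₀ ∧ 0 < C ∧
      ∀ ε : ℝ, 0 < ε → ε ≤ ε₀ → ∀ a : ℝ, 0 ≤ a →
      ∀ f h : Pt d → ℝ, IsDirSol ε (0 : Pt d) R a f h →
      ∀ F : ℝ, (∀ y ∈ bdryC ε (0 : Pt d) R, |f y| ≤ F) →
        sobNorm ε k (Ω ∩ latt d ε) h ≤
          ENNReal.ofReal (C * (Real.sqrt (1 + a))⁻¹ * F) := by
  classical
  set δ : ℝ := R / (100 * (k + 1)) with hδdef
  have hk1 : (0:ℝ) < 100 * (k + 1) := by positivity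
  have hδ : 0 < δ := div_pos hR hk1
  set Creal : ℝ := ∑ j ∈ Finset.range (k+1), (2*(d:ℝ))^j * (16*(d:ℝ)*(1/δ)^2)^j with hCrealdef
  set W : ℝ := (1 + 4*(d:ℝ)*(1/δ)^2) * (R+3)^d with hWdef
  have hW : 0 < W := by
    rw [hWdef]
    have h1 : (0:ℝ) < 1 + 4*(d:ℝ)*(1/δ)^2 := by positivity
    have h2 : (0:ℝ) < (R+3)^d := pow_pos (by linarith) d
    exact mul_pos h1 h2
  have hCreal : 0 ≤ Creal := by
    rw [hCrealdef]
    apply Finset.sum_nonneg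
    intro j _
    have : (0:ℝ) ≤ (d:ℝ) := Nat.cast_nonneg d
    positivity
  refine ⟨min (δ/2) 1, Real.sqrt (Creal * W) + 1,
    lt_min (half_pos hδ) one_pos, by positivity, ?_⟩
  intro ε hε hεε₀ a ha f h hsol F hfF
  set C : ℝ := Real.sqrt (Creal * W) + 1 with hCdef
  have hC1 : 1 ≤ C := by
    rw [hCdef]; linarith [Real.sqrt_nonneg (Creal * W)]
  have hεδ : ε ≤ δ/2 := le_trans hεε₀ (min_le_left _ _)
  have hε1 : ε ≤ 1 := le_trans hεε₀ (min_le_right _ _)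
  have h1a : (0:ℝ) < 1 + a := by linarith
  -- F is nonnegative
  have hF : 0 ≤ F := by
    obtain ⟨y, hy⟩ := bdry_nonempty ε R hd hε hR
    exact (abs_nonneg _).trans (hfF y hy)
  -- the lattice function
  set u : Idx d → ℝ := fun n => h (toPt ε n) with hu
  have heqU : ∀ m : Idx d, nm ε m < R/2 → Leq ε a u m :=
    fun m hm => eq_transfer ε R a hR f h hsol m hm
  -- max principle
  have hmax := max_principle ε R a F hd hε hR ha f h hsol hfF
  have husq : ∀ m : Idx d, nm ε m < R/2 → u m ^ 2 ≤ F^2 := by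
    intro m hm
    have h1 : toPt ε m ∈ clC ε (0 : Pt d) R :=
      Or.inl ⟨(mem_cube_iff ε R hR m).mpr hm, Set.mem_range_self _⟩
    have h2 := abs_le.mp (hmax m h1)
    nlinarith [h2.1, h2.2]
  -- key radii arithmetic
  have hsumδ : 2*(k:ℝ)*δ + 2*δ = R/50 := by
    rw [hδdef]; field_simp; ring
  have hδle : δ ≤ R/100 := by
    rw [hδdef]
    rw [div_le_div_iff₀ hk1 (by norm_num : (0:ℝ) < 100)]
    nlinarith [Nat.cast_nonneg (α := ℝ) k, hR]
  have hkd : R/4 + 2*(k:ℝ)*δ + 2*δ + ε ≤ R/2 := by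
    nlinarith [hεδ, hδle, hsumδ, hR]
  -- the big box
  set NB : ℤ := ⌈(R/2)/ε⌉ + 1 with hNBdef
  have hNB : (R/2)/ε ≤ (NB:ℝ) := by
    rw [hNBdef]; push_cast; linarith [Int.le_ceil ((R/2)/ε)]
  set B : Finset (Idx d) := Finset.Icc (fun _ => -NB) (fun _ => NB) with hBdef
  have hBmem : ∀ m : Idx d, nm ε m ≤ R/2 → m ∈ B :=
    fun m hm => mem_box_of_nm hε hNB m hm
  -- counting
  have hcount : ∀ S : Finset (Idx d), (∀ m ∈ S, nm ε m ≤ R/2) →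
      ε^d * (S.card : ℝ) ≤ (R+3)^d := by
    intro S hS
    have h1 := count_bound ε (R/2) hε hε1 (by linarith) S hS
    have h2 : 2*(R/2) + 3 = R + 3 := by ring
    rw [h2] at h1
    exact h1
  -- the main mass set
  set G : Finset (Idx d) := B.filter (fun m => nm ε m ≤ R/4 + 2*(k:ℝ)*δ) with hGdef
  set SG : ℝ := ∑ m ∈ G, (u m)^2 with hSGdef
  have hGrad : ∀ m ∈ G, nm ε m ≤ R/4 + 2*(k:ℝ)*δ := fun m hm => (Finset.mem_filter.mp hm).2
  have hGF : ∀ m ∈ G, (u m)^2 ≤ F^2 := by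
    intro m hm
    apply husq
    have := hGrad m hm
    linarith [hδ, hε]
  have hSG0 : 0 ≤ SG := Finset.sum_nonneg (fun m _ => sq_nonneg _)
  -- trivial bound
  have htriv : ε^d * SG ≤ (R+3)^d * F^2 := by
    have h1 : SG ≤ (G.card : ℝ) * F^2 := by
      rw [hSGdef]
      calc ∑ m ∈ G, (u m)^2 ≤ ∑ _m ∈ G, F^2 := Finset.sum_le_sum hGF
      _ = (G.card : ℝ) * F^2 := by rw [Finset.sum_const, nsmul_eq_mul]
    have h2 : ε^d * (G.card : ℝ) ≤ (R+3)^d := by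
      apply hcount
      intro m hm
      have := hGrad m hm
      linarith [hδ, hε]
    calc ε^d * SG ≤ ε^d * ((G.card : ℝ) * F^2) := by
          apply mul_le_mul_of_nonneg_left h1 (pow_nonneg hε.le d)
    _ = (ε^d * (G.card:ℝ)) * F^2 := by ring
    _ ≤ (R+3)^d * F^2 := by
        apply mul_le_mul_of_nonneg_right h2 (sq_nonneg F)
  -- mass bound via Caccioppoli
  have hmass : ε^d * (a * SG) ≤ (4*(d:ℝ)*(1/δ)^2) * ((R+3)^d * F^2) := by
    set A : Finset (Idx d) := B.filter (fun m => nm ε m ≤ R/4 + 2*(k:ℝ)*δ + δ + ε) with hAdef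
    have hra := cacc_mass ε δ a (R/4 + 2*(k:ℝ)*δ + δ) hε hδ ha u B A G
      (Finset.filter_subset _ _) (Finset.filter_subset _ _)
      (fun m hm => heqU m (by linarith [hkd, hδ, hε]))
      (fun m hm => Finset.mem_filter.mpr ⟨hBmem m (by linarith [hkd, hδ]), by linarith⟩)
      (fun m hm => hBmem m (by linarith [hkd, hδ]))
      (fun m hm => by have := hGrad m hm; linarith)
    have hAcard : ∑ m ∈ A, (u m)^2 ≤ (A.card : ℝ) * F^2 := by
      calc ∑ m ∈ A, (u m)^2 ≤ ∑ _m ∈ A, F^2 := by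
            apply Finset.sum_le_sum
            intro m hm
            apply husq
            have := (Finset.mem_filter.mp hm).2
            linarith [hkd, hδ]
      _ = (A.card : ℝ) * F^2 := by rw [Finset.sum_const, nsmul_eq_mul]
    have hAc : ε^d * (A.card : ℝ) ≤ (R+3)^d := by
      apply hcount
      intro m hm
      have := (Finset.mem_filter.mp hm).2
      linarith [hkd, hδ]
    have hd0 : (0:ℝ) ≤ 4*(d:ℝ)*(1/δ)^2 := by
      have : (0:ℝ) ≤ (d:ℝ) := Nat.cast_nonneg d
      positivity
    calc ε^d * (a * SG) ≤ ε^d * ((4*(d:ℝ)*(1/δ)^2) * ∑ m ∈ A, (u m)^2) := by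
          apply mul_le_mul_of_nonneg_left hra (pow_nonneg hε.le d)
    _ = (4*(d:ℝ)*(1/δ)^2) * (ε^d * ∑ m ∈ A, (u m)^2) := by ring
    _ ≤ (4*(d:ℝ)*(1/δ)^2) * ((R+3)^d * F^2) := by
        apply mul_le_mul_of_nonneg_left _ hd0
        calc ε^d * ∑ m ∈ A, (u m)^2 ≤ ε^d * ((A.card:ℝ) * F^2) := by
              apply mul_le_mul_of_nonneg_left hAcard (pow_nonneg hε.le d)
        _ = (ε^d * (A.card:ℝ)) * F^2 := by ring
        _ ≤ (R+3)^d * F^2 := mul_le_mul_of_nonneg_right hAc (sq_nonneg F)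
  -- combined mass estimate
  have hSGb : ε^d * SG ≤ W * F^2 / (1+a) := by
    rw [le_div_iff₀ h1a]
    have hexp : ε^d * SG * (1+a) = ε^d * SG + ε^d * (a * SG) := by ring
    rw [hexp, hWdef]
    nlinarith [htriv, hmass]
  -- iteration
  have hiter := iter_bound ε δ a (R/2 - 4*δ) hε hδ ha hεδ u B
    (fun m hm => hBmem m (by linarith))
    (fun m hm => heqU m (by linarith))
  have hterm : ∀ j : ℕ, j ≤ k → ∀ es' : List (Fin d × Bool), es'.length = j →
      ε^d * ∑ m ∈ B.filter (fun m => nm ε m ≤ R/4), (Dlist ε es' u m)^2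
        ≤ (16*(d:ℝ)*(1/δ)^2)^j * (W * F^2 / (1+a)) := by
    intro j hj es' hlen
    have hjk : (j:ℝ) ≤ (k:ℝ) := Nat.cast_le.mpr hj
    have h1 := hiter es' (R/4) (by linarith) (by
      rw [hlen]
      have : 2*(j:ℝ)*δ ≤ 2*(k:ℝ)*δ := by nlinarith [hδ.le]
      nlinarith [hsumδ, hδle, hR])
    rw [hlen] at h1
    have h2 : ∑ m ∈ B.filter (fun m => nm ε m ≤ R/4 + 2*(j:ℝ)*δ), (u m)^2 ≤ SG := by
      rw [hSGdef]
      apply Finset.sum_le_sum_of_subset_of_nonneg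
      · intro m hm
        have h3 := Finset.mem_filter.mp hm
        apply Finset.mem_filter.mpr
        refine ⟨h3.1, ?_⟩
        have : 2*(j:ℝ)*δ ≤ 2*(k:ℝ)*δ := by nlinarith [hδ.le]
        linarith [h3.2]
      · intro m _ _; exact sq_nonneg _
    have hc0 : (0:ℝ) ≤ (16*(d:ℝ)*(1/δ)^2)^j := by
      have : (0:ℝ) ≤ (d:ℝ) := Nat.cast_nonneg d
      positivity
    calc ε^d * ∑ m ∈ B.filter (fun m => nm ε m ≤ R/4), (Dlist ε es' u m)^2
        ≤ ε^d * ((16*(d:ℝ)*(1/δ)^2)^j * SG) := by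
          apply mul_le_mul_of_nonneg_left _ (pow_nonneg hε.le d)
          exact le_trans h1 (mul_le_mul_of_nonneg_left h2 hc0)
    _ = (16*(d:ℝ)*(1/δ)^2)^j * (ε^d * SG) := by ring
    _ ≤ (16*(d:ℝ)*(1/δ)^2)^j * (W * F^2 / (1+a)) :=
        mul_le_mul_of_nonneg_left hSGb hc0
  -- eint bound
  have heint : ∀ j : ℕ, j ≤ k → ∀ es : Fin j → Fin d × Bool,
      eint ε (Ω ∩ latt d ε) (fun x => (nablaList ε (List.ofFn es) h x)^2)
        ≤ ENNReal.ofReal ((16*(d:ℝ)*(1/δ)^2)^j * (W * F^2 / (1+a))) := by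
    intro j hj es
    rw [eint]
    set s0 : Finset (Idx d) := B.filter (fun m => nm ε m ≤ R/4) with hs0
    have hzero : ∀ m : Idx d, m ∉ s0 →
        Set.indicator (Ω ∩ latt d ε)
          (fun x => ENNReal.ofReal (ε ^ d * (nablaList ε (List.ofFn es) h x)^2))
          (toPt ε m) = 0 := by
      intro m hm
      apply Set.indicator_of_notMem
      intro hmem
      apply hm
      have hΩm := hΩs hmem.1
      have h1 : nm ε m < R/4/2 := (mem_cube_iff ε (R/4) (by linarith) m).mp hΩm
      apply Finset.mem_filter.mpr
      exact ⟨hBmem m (by linarith), by linarith⟩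
    rw [tsum_eq_sum hzero]
    have hle : ∑ m ∈ s0, Set.indicator (Ω ∩ latt d ε)
          (fun x => ENNReal.ofReal (ε ^ d * (nablaList ε (List.ofFn es) h x)^2)) (toPt ε m)
        ≤ ∑ m ∈ s0, ENNReal.ofReal (ε ^ d * (Dlist ε (List.ofFn es) u m)^2) := by
      apply Finset.sum_le_sum
      intro m _
      have h1 := Set.indicator_le_self (Ω ∩ latt d ε)
        (fun x => ENNReal.ofReal (ε ^ d * (nablaList ε (List.ofFn es) h x)^2)) (toPt ε m)
      have h2 : nablaList ε (List.ofFn es) h (toPt ε m)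
          = Dlist ε (List.ofFn es) (fun n => h (toPt ε n)) m := nablaList_toPt ε _ h m
      simp only [h2] at h1
      exact h1
    refine le_trans hle ?_
    have heq2 : ∑ m ∈ s0, ENNReal.ofReal (ε ^ d * (Dlist ε (List.ofFn es) u m)^2)
        = ENNReal.ofReal (∑ m ∈ s0, ε ^ d * (Dlist ε (List.ofFn es) u m)^2) := by
      rw [ENNReal.ofReal_sum_of_nonneg]
      intro m _
      exact mul_nonneg (pow_nonneg hε.le d) (sq_nonneg _)
    rw [heq2]
    apply ENNReal.ofReal_le_ofReal
    have heq1 : ∑ m ∈ s0, ε ^ d * (Dlist ε (List.ofFn es) u m)^2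
        = ε^d * ∑ m ∈ s0, (Dlist ε (List.ofFn es) u m)^2 := by
      rw [Finset.mul_sum]
    rw [heq1, hs0]
    exact hterm j hj (List.ofFn es) List.length_ofFn
  -- Sobolev norm bound
  have hQ0 : 0 ≤ W * F^2 / (1+a) :=
    div_nonneg (mul_nonneg hW.le (sq_nonneg F)) h1a.le
  have hsob : sobSq ε k (Ω ∩ latt d ε) h ≤ ENNReal.ofReal (Creal * (W * F^2 / (1+a))) := by
    rw [sobSq]
    have hstep1 : ∀ j ∈ Finset.range (k + 1),
        (2 : ℝ≥0∞)⁻¹ ^ j * (∑ es : Fin j → Fin d × Bool,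
          eint ε (Ω ∩ latt d ε) fun x => (nablaList ε (List.ofFn es) h x) ^ 2)
        ≤ ENNReal.ofReal ((2*(d:ℝ))^j * ((16*(d:ℝ)*(1/δ)^2)^j * (W * F^2 / (1+a)))) := by
      intro j hj
      have hjk : j ≤ k := Nat.lt_succ_iff.mp (Finset.mem_range.mp hj)
      have t1 : (2 : ℝ≥0∞)⁻¹ ^ j * (∑ es : Fin j → Fin d × Bool,
          eint ε (Ω ∩ latt d ε) fun x => (nablaList ε (List.ofFn es) h x) ^ 2)
          ≤ ∑ es : Fin j → Fin d × Bool,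
            eint ε (Ω ∩ latt d ε) fun x => (nablaList ε (List.ofFn es) h x) ^ 2 := by
        calc (2 : ℝ≥0∞)⁻¹ ^ j * (∑ es : Fin j → Fin d × Bool,
              eint ε (Ω ∩ latt d ε) fun x => (nablaList ε (List.ofFn es) h x) ^ 2)
            ≤ 1 * (∑ es : Fin j → Fin d × Bool,
              eint ε (Ω ∩ latt d ε) fun x => (nablaList ε (List.ofFn es) h x) ^ 2) :=
              mul_le_mul_left (pow_le_one' (ENNReal.inv_le_one.mpr one_le_two) j) _
        _ = _ := one_mul _
      refine le_trans t1 ?_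
      have t2 : ∑ es : Fin j → Fin d × Bool,
          (eint ε (Ω ∩ latt d ε) fun x => (nablaList ε (List.ofFn es) h x) ^ 2)
          ≤ ∑ _es : Fin j → Fin d × Bool,
            ENNReal.ofReal ((16*(d:ℝ)*(1/δ)^2)^j * (W * F^2 / (1+a))) :=
        Finset.sum_le_sum (fun es _ => heint j hjk es)
      refine le_trans t2 ?_
      rw [Finset.sum_const, Finset.card_univ, nsmul_eq_mul]
      rw [← ENNReal.ofReal_natCast (Fintype.card (Fin j → Fin d × Bool))]
      rw [← ENNReal.ofReal_mul (by positivity)]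
      apply ENNReal.ofReal_le_ofReal
      apply le_of_eq
      have hcard : Fintype.card (Fin j → Fin d × Bool) = (d * 2)^j := by
        rw [Fintype.card_fun]
        simp [Fintype.card_prod]
      rw [hcard]
      push_cast
      ring
    refine le_trans (Finset.sum_le_sum hstep1) ?_
    have hnn : ∀ j ∈ Finset.range (k+1),
        (0:ℝ) ≤ (2*(d:ℝ))^j * ((16*(d:ℝ)*(1/δ)^2)^j * (W * F^2 / (1+a))) := by
      intro j _
      have h5 : (0:ℝ) ≤ (2*(d:ℝ))^j := by positivity
      have h6 : (0:ℝ) ≤ (16*(d:ℝ)*(1/δ)^2)^j := by positivity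
      exact mul_nonneg h5 (mul_nonneg h6 hQ0)
    rw [← ENNReal.ofReal_sum_of_nonneg hnn]
    apply ENNReal.ofReal_le_ofReal
    apply le_of_eq
    rw [hCrealdef, Finset.sum_mul]
    apply Finset.sum_congr rfl
    intro j _
    ring
  -- conclude
  have hCW : Creal * W ≤ C^2 := by
    have hs := Real.sq_sqrt (mul_nonneg hCreal hW.le)
    rw [hCdef]
    nlinarith [Real.sqrt_nonneg (Creal * W)]
  have hrealchain : Creal * (W * F^2 / (1+a)) ≤ (C * (Real.sqrt (1+a))⁻¹ * F)^2 := by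
    have hr2 : (C * (Real.sqrt (1+a))⁻¹ * F)^2 = C^2 * F^2 / (1+a) := by
      rw [mul_pow, mul_pow, inv_pow, Real.sq_sqrt h1a.le]
      ring
    rw [hr2]
    rw [show Creal * (W * F^2 / (1+a)) = Creal * W * F^2 / (1+a) by ring]
    gcongr
  have hr0 : 0 ≤ C * (Real.sqrt (1+a))⁻¹ * F :=
    mul_nonneg (mul_nonneg (by linarith : (0:ℝ) ≤ C)
      (inv_nonneg.mpr (Real.sqrt_nonneg _))) hF
  have hstep : sobSq ε k (Ω ∩ latt d ε) h
      ≤ (ENNReal.ofReal (C * (Real.sqrt (1+a))⁻¹ * F))^2 := by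
    rw [← ENNReal.ofReal_pow hr0]
    exact le_trans hsob (ENNReal.ofReal_le_ofReal hrealchain)
  rw [sobNorm]
  calc (sobSq ε k (Ω ∩ latt d ε) h) ^ (1/2 : ℝ)
      ≤ ((ENNReal.ofReal (C * (Real.sqrt (1+a))⁻¹ * F))^2) ^ (1/2 : ℝ) :=
        ENNReal.rpow_le_rpow hstep (by norm_num)
  _ = ENNReal.ofReal (C * (Real.sqrt (1+a))⁻¹ * F) := by
      rw [← ENNReal.rpow_natCast (ENNReal.ofReal (C * (Real.sqrt (1+a))⁻¹ * F)) 2]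
      rw [← ENNReal.rpow_mul]
      rw [show ((2:ℕ):ℝ) * (1/2) = 1 by norm_num, ENNReal.rpow_one]
end FRD
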